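/- Let p be a pmf on X×Y (X, Y finite) with strictly positive marginals, and let M = |X|·|Y| + 1. Then ε₁(p) ≤ ε₃, where ε₃ is the maximum of Σ_{t=1}^{M} min{ δ(x,y,t) : (x,y) with p(x,y) > 0 } over all functions δ : X×Y×{1,…,M} → [0,∞) such that Σ_{t=1}^{M} δ(x,y,t) = 1 for every (x,y) and, for every t, the |X|×|Y| matrix with entries p(x,y)·δ(x,y,t) has rank at most one. -/

import Mathlib

/-- A probability mass function on a finite set `S`. -/
def IsPMF {S : Type*} [Fintype S] (p : S → ℝ) : Prop :=
  (∀ s, 0 ≤ p s) ∧ ∑ s, p s = 1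

/-- The value assigned to a path `(x₁,y₁,…,x_k,y_k)` (indexed here by `Fin (m+1)`,
so `k = m+1 ≥ 1`).  Subtraction in `Fin (m+1)` is cyclic, so the denominator is
`p(x₁,y_k) · ∏_{i=2}^k p(x_i,y_{i-1})`. -/
noncomputable def pathValue {X Y : Type*} [Fintype X] [Fintype Y] (p : X × Y → ℝ)
    {m : ℕ} (x : Fin (m + 1) → X) (y : Fin (m + 1) → Y) : ℝ :=
  ((∏ i, p (x i, y i)) / ∏ i, p (x i, y (i - 1))) ^ (1 / (m + 1 : ℝ))

/-- A path is admissible if the `x_i` are pairwise distinct, the `y_i` are pairwise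
distinct, `p(x₁,y_k) > 0`, and `p(x_i,y_{i-1}) > 0` for `2 ≤ i ≤ k`. -/
def IsAdmissiblePath {X Y : Type*} [Fintype X] [Fintype Y] (p : X × Y → ℝ)
    {m : ℕ} (x : Fin (m + 1) → X) (y : Fin (m + 1) → Y) : Prop :=
  Function.Injective x ∧ Function.Injective y ∧ ∀ i, 0 < p (x i, y (i - 1))

/-- `ε₁(p)`: the minimum value over all admissible paths. -/
noncomputable def eps1 {X Y : Type*} [Fintype X] [Fintype Y] (p : X × Y → ℝ) : ℝ :=
  sInf { v : ℝ | ∃ (m : ℕ) (x : Fin (m + 1) → X) (y : Fin (m + 1) → Y),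
    IsAdmissiblePath p x y ∧ v = pathValue p x y }

/-- `ε₃(p, M)`: the supremum of `Σ_{t=1}^{M} min{δ(x,y,t) : p(x,y) > 0}` over all
`δ : X×Y×{1,…,M} → [0,∞)` with `Σ_t δ(x,y,t) = 1` for every `(x,y)` and such that,
for every `t`, the matrix `[p(x,y)·δ(x,y,t)]` has rank at most one. -/
noncomputable def eps3 {X Y : Type*} [Fintype X] [Fintype Y]
    (p : X → Y → ℝ) (M : ℕ) : ℝ :=
  sSup { r : ℝ | ∃ δ : X → Y → Fin M → ℝ,
    (∀ x y t, 0 ≤ δ x y t) ∧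
    (∀ x y, ∑ t, δ x y t = 1) ∧
    (∀ t, (Matrix.of fun x y => p x y * δ x y t).rank ≤ 1) ∧
    r = ∑ t, ⨅ xy : {xy : X × Y // 0 < p xy.1 xy.2}, δ xy.1.1 xy.1.2 t }


namespace Eps13Aux
open List

variable {V : Type*} [Fintype V] (W : V → V → ℝ)

/-- total weight of a walk given as a list of visited vertices -/
def tW : List V → ℝ
  | [] => 0
  | [_] => 0
  | v :: u :: l => W v u + tW (u :: l)

lemma tW_cons (v u : V) (l : List V) : tW W (v :: u :: l) = W v u + tW W (u :: l) := rfl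

lemma tW_split (x : V) (l₂ : List V) : ∀ (l₁ : List V),
    tW W (l₁ ++ x :: l₂) = tW W (l₁ ++ [x]) + tW W (x :: l₂)
  | [] => by simp [tW]
  | [a] => by simp [tW]
  | a :: b :: t => by
    have h := tW_split x l₂ (b :: t)
    simp only [List.cons_append, tW_cons] at *
    rw [h]; ring

lemma tW_ge {C : ℝ} (hC : ∀ u v, -C ≤ W u v) (hC0 : 0 ≤ C) :
    ∀ l : List V, -(l.length : ℝ) * C ≤ tW W l
  | [] => by simp [tW]
  | [v] => by simp [tW]; nlinarith
  | v :: u :: l => by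
    have h := tW_ge hC hC0 (u :: l)
    have := hC v u
    simp only [tW_cons, List.length_cons] at *
    push_cast
    push_cast at h
    nlinarith

lemma exists_cycle_decomp : ∀ {l : List V}, ¬ l.Nodup →
    ∃ (p : List V) (a : V) (m s : List V), l = p ++ a :: (m ++ a :: s) ∧ a ∉ m ∧ m.Nodup := by
  intro l
  induction l with
  | nil => intro h; exact absurd List.nodup_nil h
  | cons x t ih =>
    intro h
    by_cases ht : t.Nodup
    · have hx : x ∈ t := by
        by_contra hx
        exact h (List.nodup_cons.mpr ⟨hx, ht⟩)
      obtain ⟨t₁, t₂, rfl⟩ := List.append_of_mem hx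
      have h1 : t₁.Nodup := ht.of_append_left
      have h2 : x ∉ t₁ := by
        intro hxm
        rcases List.nodup_append'.mp ht with ⟨-, -, hd⟩
        exact hd hxm (by simp)
      exact ⟨[], x, t₁, t₂, by simp, h2, h1⟩
    · obtain ⟨p, a, m, s, rfl, ham, hm⟩ := ih ht
      exact ⟨x :: p, a, m, s, by simp, ham, hm⟩

lemma tW_ge_card {C : ℝ} (hC : ∀ u v, -C ≤ W u v) (hC0 : 0 ≤ C)
    (hcyc : ∀ (a : V) (m : List V), a ∉ m → m.Nodup → 0 ≤ tW W (a :: (m ++ [a]))) :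
    ∀ (l : List V), -(Fintype.card V : ℝ) * C ≤ tW W l := by
  suffices h : ∀ (n : ℕ) (l : List V), l.length ≤ n → -(Fintype.card V : ℝ) * C ≤ tW W l by
    intro l; exact h l.length l le_rfl
  intro n
  induction n with
  | zero =>
    intro l hl
    interval_cases h : l.length
    · rw [List.length_eq_zero_iff] at h; subst h; simp [tW]; positivity
  | succ n ih =>
    intro l hl
    by_cases hnd : l.Nodup
    · calc -(Fintype.card V : ℝ) * C ≤ -(l.length : ℝ) * C := by
            have h2 : (l.length : ℝ) ≤ (Fintype.card V : ℝ) := Nat.cast_le.mpr hnd.length_le_card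
            nlinarith
          _ ≤ tW W l := tW_ge W hC hC0 l
    · obtain ⟨p, a, m, s, rfl, ham, hm⟩ := exists_cycle_decomp hnd
      have key1 : tW W (p ++ a :: (m ++ a :: s)) =
          tW W (p ++ [a]) + tW W (a :: (m ++ a :: s)) := tW_split W a _ p
      have key2 : tW W (a :: (m ++ a :: s)) =
          tW W ((a :: m) ++ [a]) + tW W (a :: s) := by
        have := tW_split W a s (a :: m)
        simpa using this
      have key3 : tW W (p ++ a :: s) = tW W (p ++ [a]) + tW W (a :: s) := tW_split W a s p
      have hcy : 0 ≤ tW W (a :: (m ++ [a])) := hcyc a m ham hm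
      have hlen : (p ++ a :: s).length ≤ n := by
        simp only [List.length_append, List.length_cons] at hl ⊢
        omega
      have := ih (p ++ a :: s) hlen
      simp only [List.cons_append] at key2 hcy
      linarith

theorem exists_potential [Nonempty V]
    {C : ℝ} (hC : ∀ u v, -C ≤ W u v) (hC0 : 0 ≤ C)
    (hcyc : ∀ (a : V) (m : List V), a ∉ m → m.Nodup → 0 ≤ tW W (a :: (m ++ [a]))) :
    ∃ d : V → ℝ, ∀ v u, d v ≤ d u + W v u := by
  set S : V → Set ℝ := fun v => {r | ∃ l : List V, r = tW W (v :: l)} with hS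
  have hbdd : ∀ v, ∀ r ∈ S v, -(Fintype.card V : ℝ) * C ≤ r := by
    rintro v r ⟨l, rfl⟩
    exact tW_ge_card W hC hC0 hcyc _
  have hne : ∀ v, (S v).Nonempty := fun v => ⟨tW W [v], [], rfl⟩
  refine ⟨fun v => sInf (S v), fun v u => ?_⟩
  have h1 : ∀ l : List V, sInf (S v) ≤ W v u + tW W (u :: l) := by
    intro l
    exact csInf_le ⟨_, hbdd v⟩ ⟨u :: l, rfl⟩
  have : sInf (S v) - W v u ≤ sInf (S u) := by
    apply le_csInf (hne u)
    rintro r ⟨l, rfl⟩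
    linarith [h1 l]
  linarith



open List Sum

variable {X Y : Type*}

/-- edge weights on the bipartite graph `X ⊕ Y` -/
def Wgt (w : X → Y → ℝ) (L K : ℝ) : (X ⊕ Y) → (X ⊕ Y) → ℝ
  | .inl _, .inl _ => K
  | .inl x, .inr y => L - w x y
  | .inr y, .inl x => w x y
  | .inr _, .inr _ => K

/-- decode an alternating walk starting (implicitly) at `inl x` into its pairs -/
def go : X → List (X ⊕ Y) → Option (List (X × Y))
  | x, [.inr y] => some [(x, y)]
  | x, .inr y :: .inl x' :: rest => (go x' rest).map (fun pl => (x, y) :: pl)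
  | _, _ => none

def cross (w : X → Y → ℝ) : List (X × Y) → X → ℝ
  | [], _ => 0
  | [(_, y)], z => w z y
  | (_, y) :: q :: t, z => w q.1 y + cross w (q :: t) z

lemma go_head : ∀ {x : X} {m : List (X ⊕ Y)} {pl : List (X × Y)},
    go x m = some pl → ∃ (y : Y) (t : List (X × Y)), pl = (x, y) :: t := by
  intro x m pl
  match m with
  | [] => simp [go]
  | [.inl x'] => simp [go]
  | [.inr y] => intro h; simp [go] at h; exact ⟨y, [], h.symm⟩
  | .inl x' :: a :: rest => simp [go]
  | .inr y :: .inr y' :: rest => simp [go]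
  | .inr y :: .inl x' :: rest =>
    intro h
    simp only [go, Option.map_eq_some_iff] at h
    obtain ⟨pl', _, rfl⟩ := h
    exact ⟨y, pl', rfl⟩

lemma go_mem : ∀ {x : X} {m : List (X ⊕ Y)} {pl : List (X × Y)},
    go x m = some pl → ∀ q ∈ pl, (inl q.1 ∈ (inl x :: m : List (X ⊕ Y)) ∧ (inr q.2 : X ⊕ Y) ∈ m)
  | x, [.inr y], pl => by
    intro h q hq
    simp [go] at h
    subst h
    simp at hq
    subst hq
    simp
  | x, .inr y :: .inl x' :: rest, pl => by
    intro h q hq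
    simp only [go, Option.map_eq_some_iff] at h
    obtain ⟨pl', h', rfl⟩ := h
    rcases List.mem_cons.mp hq with rfl | hq'
    · simp
    · obtain ⟨h1, h2⟩ := go_mem h' q hq'
      rcases List.mem_cons.mp h1 with he | hm
      · constructor
        · simp [he]
        · simp [go_mem h' q hq' |>.2]
      · exact ⟨by simp [List.mem_cons]; tauto, by simp [List.mem_cons]; tauto⟩
  | x, [], pl => by simp [go]
  | x, [.inl x'], pl => by simp [go]
  | x, .inl x' :: a :: rest, pl => by simp [go]
  | x, .inr y :: .inr y' :: rest, pl => by simp [go]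

lemma go_nodup : ∀ {x : X} {m : List (X ⊕ Y)} {pl : List (X × Y)},
    go x m = some pl → ((inl x :: m : List (X ⊕ Y)).Nodup) →
    (pl.map Prod.fst).Nodup ∧ (pl.map Prod.snd).Nodup
  | x, [.inr y], pl => by
    intro h _
    simp [go] at h; subst h; simp
  | x, .inr y :: .inl x' :: rest, pl => by
    intro h hnd
    simp only [go, Option.map_eq_some_iff] at h
    obtain ⟨pl', h', rfl⟩ := h
    have hnd' : ((inl x' :: rest : List (X ⊕ Y))).Nodup := ((hnd.of_cons).of_cons)
    obtain ⟨ih1, ih2⟩ := go_nodup h' hnd'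
    constructor
    · simp only [List.map_cons, List.nodup_cons]
      refine ⟨?_, ih1⟩
      intro hx
      obtain ⟨q, hq, hqx⟩ := List.mem_map.mp hx
      have := (go_mem h' q hq).1
      rw [hqx] at this
      have hxm : (inl x : X ⊕ Y) ∈ (.inr y :: .inl x' :: rest : List (X ⊕ Y)) := by
        rcases List.mem_cons.mp this with he | hm
        · simp [← he]
        · simp [List.mem_cons]; tauto
      exact (List.nodup_cons.mp hnd).1 hxm
    · simp only [List.map_cons, List.nodup_cons]
      refine ⟨?_, ih2⟩
      intro hy
      obtain ⟨q, hq, hqy⟩ := List.mem_map.mp hy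
      have := (go_mem h' q hq).2
      rw [hqy] at this
      have hnd2 := hnd.of_cons
      exact (List.nodup_cons.mp hnd2).1 (by simp [List.mem_cons]; tauto)
  | x, [], pl => by simp [go]
  | x, [.inl x'], pl => by simp [go]
  | x, .inl x' :: a :: rest, pl => by simp [go]
  | x, .inr y :: .inr y' :: rest, pl => by simp [go]

lemma go_weight (w : X → Y → ℝ) (L K : ℝ) :
    ∀ {x : X} {m : List (X ⊕ Y)} {pl : List (X × Y)} (z : X),
    go x m = some pl →
    tW (Wgt w L K) (inl x :: (m ++ [inl z])) =
      (pl.map (fun q => L - w q.1 q.2)).sum + cross w pl z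
  | x, [.inr y], pl, z => by
    intro h
    simp [go] at h; subst h
    simp [tW, Wgt, cross]
  | x, .inr y :: .inl x' :: rest, pl, z => by
    intro h
    simp only [go, Option.map_eq_some_iff] at h
    obtain ⟨pl', h', rfl⟩ := h
    obtain ⟨y'', t, rfl⟩ := go_head h'
    have ih := go_weight w L K z h'
    simp only [List.cons_append, tW_cons] at ih ⊢
    rw [ih]
    simp [Wgt, cross]
    ring
  | x, [], pl, z => by simp [go]
  | x, [.inl x'], pl, z => by simp [go]
  | x, .inl x' :: a :: rest, pl, z => by simp [go]
  | x, .inr y :: .inr y' :: rest, pl, z => by simp [go]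

end Eps13Aux

namespace Eps13Aux
open List Sum

variable {X Y : Type*} [Fintype X] [Fintype Y]

lemma sum_map_fin {α : Type*} (g : α → ℝ) : ∀ (l : List α),
    (l.map g).sum = ∑ i : Fin l.length, g l[i]
  | [] => by simp
  | a :: t => by
    rw [List.map_cons, List.sum_cons, sum_map_fin g t]
    show _ = ∑ i : Fin (t.length + 1), g ((a :: t)[(i : ℕ)]'(i.isLt))
    rw [Fin.sum_univ_succ]
    simp

lemma cross_eq (w : X → Y → ℝ) (z : X) : ∀ (tl : List (X × Y)) (hd : X × Y),
    cross w (hd :: tl) z = ∑ i : Fin (tl.length + 1),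
      w (if h : (i.val + 1) < tl.length + 1 then ((hd :: tl).get ⟨i.val + 1, h⟩).1 else z)
        ((hd :: tl).get ⟨i.val, i.isLt⟩).2
  | [], hd => by
    simp [cross]
  | q :: t, hd => by
    have ih := cross_eq w z t q
    rw [show cross w (hd :: q :: t) z = w q.1 hd.2 + cross w (q :: t) z from rfl, ih]
    show _ = ∑ i : Fin ((t.length + 1) + 1),
      w (if h : (i.val + 1) < (t.length + 1) + 1 then ((hd :: q :: t).get ⟨i.val + 1, h⟩).1 else z)
        ((hd :: q :: t).get ⟨i.val, i.isLt⟩).2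
    conv_rhs => rw [Fin.sum_univ_succ]
    congr 1
    · simp

lemma wgt_ge (w : X → Y → ℝ) (L K C : ℝ) (hC1 : ∀ x y, -C ≤ w x y)
    (hC2 : ∀ x y, -C ≤ L - w x y) (hC0 : 0 ≤ C) (hK : 0 ≤ K) :
    ∀ u v : X ⊕ Y, -C ≤ Wgt w L K u v := by
  intro u v
  rcases u with x | y <;> rcases v with x' | y'
  · exact le_trans (neg_nonpos.mpr hC0) hK
  · exact hC2 x y'
  · exact hC1 x' y
  · exact le_trans (neg_nonpos.mpr hC0) hK

lemma go_none (w : X → Y → ℝ) (L K C : ℝ) (hC1 : ∀ x y, -C ≤ w x y)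
    (hC2 : ∀ x y, -C ≤ L - w x y) (hC0 : 0 ≤ C) (hK : 0 ≤ K) :
    ∀ (m : List (X ⊕ Y)) (x z : X), go x m = none →
      K - ((m.length : ℝ) + 1) * C ≤ tW (Wgt w L K) (inl x :: (m ++ [inl z]))
  | [], x, z => by
    intro _
    simp only [List.nil_append, List.length_nil]
    rw [show tW (Wgt w L K) [inl x, inl z] = Wgt w L K (inl x) (inl z) + 0 from by simp [tW]]
    simp [Wgt]; nlinarith
  | .inl x'' :: rest, x, z => by
    intro _
    have hb := tW_ge (Wgt w L K) (wgt_ge w L K C hC1 hC2 hC0 hK) hC0 ((inl x'' : X ⊕ Y) :: (rest ++ [inl z]))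
    simp only [List.cons_append, tW_cons]
    have : Wgt w L K (inl x) (inl x'') = K := rfl
    rw [this]
    simp only [List.length_cons, List.length_append, List.length_cons, List.length_nil] at hb ⊢
    push_cast at hb ⊢
    nlinarith
  | [.inr y], x, z => by
    intro h; simp [go] at h
  | .inr y :: .inl x' :: rest, x, z => by
    intro h
    have h' : go x' rest = none := by
      simp only [go, Option.map_eq_none_iff] at h; exact h
    have ih := go_none w L K C hC1 hC2 hC0 hK rest x' z h'
    simp only [List.cons_append, tW_cons] at ih ⊢
    have e1 : Wgt w L K (inl x) (inr y) = L - w x y := rfl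
    have e2 : Wgt w L K (inr y) (inl x') = w x' y := rfl
    rw [e1, e2]
    have := hC1 x' y
    have := hC2 x y
    simp only [List.length_cons]
    push_cast
    push_cast at ih
    nlinarith
  | .inr y :: .inr y' :: rest, x, z => by
    intro _
    have hb := tW_ge (Wgt w L K) (wgt_ge w L K C hC1 hC2 hC0 hK) hC0 ((inr y' : X ⊕ Y) :: (rest ++ [inl z]))
    simp only [List.cons_append, tW_cons]
    have e1 : Wgt w L K (inl x) (inr y) = L - w x y := rfl
    have e2 : Wgt w L K (inr y) (inr y') = K := rfl
    rw [e1, e2]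
    have := hC2 x y
    simp only [List.length_cons, List.length_append, List.length_cons, List.length_nil] at hb ⊢
    push_cast at hb ⊢
    nlinarith

end Eps13Aux


namespace Eps13Aux
open List Sum

variable {X Y : Type*} [Fintype X] [Fintype Y]

lemma nodup_get_inj {α β : Type*} (l : List α) (f : α → β) (h : (l.map f).Nodup)
    {i j : Fin l.length} (hij : f (l.get i) = f (l.get j)) : i = j := by
  have hinj := List.nodup_iff_injective_get.mp h
  have hi : ((i : ℕ)) < (l.map f).length := by simpa using i.isLt
  have hj : ((j : ℕ)) < (l.map f).length := by simpa using j.isLt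
  have hgg : (l.map f).get ⟨i, hi⟩ = (l.map f).get ⟨j, hj⟩ := by
    simpa [List.get_eq_getElem, List.getElem_map] using hij
  have := hinj hgg
  exact Fin.ext (by simpa using congrArg Fin.val this)

lemma cyc_inl (w : X → Y → ℝ) (L K C : ℝ) (hC1 : ∀ x y, -C ≤ w x y)
    (hC2 : ∀ x y, -C ≤ L - w x y) (hC0 : 0 ≤ C)
    (hK : ((Fintype.card X + Fintype.card Y : ℕ) : ℝ) * C + C ≤ K) (hK0 : 0 ≤ K)
    (hgood : ∀ (m' : ℕ) (xf : Fin (m' + 1) → X) (yf : Fin (m' + 1) → Y),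
      Function.Injective xf → Function.Injective yf →
      ∑ i, w (xf i) (yf i) ≤ ((m' + 1 : ℕ) : ℝ) * L + ∑ i, w (xf (i + 1)) (yf i)) :
    ∀ (m : List (X ⊕ Y)) (x : X), (inl x : X ⊕ Y) ∉ m → m.Nodup →
      0 ≤ tW (Wgt w L K) (inl x :: (m ++ [inl x])) := by
  intro m x hxm hnd
  cases h : go x m with
  | none =>
    have hb := go_none w L K C hC1 hC2 hC0 hK0 m x x h
    have hlen : (m.length : ℝ) ≤ ((Fintype.card X + Fintype.card Y : ℕ) : ℝ) := by
      have h2 := hnd.length_le_card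
      rw [Fintype.card_sum] at h2
      exact_mod_cast h2
    nlinarith
  | some pl =>
    obtain ⟨y0, tl, rfl⟩ := go_head h
    have hw := go_weight w L K x h
    set pl : List (X × Y) := (x, y0) :: tl with hpl
    have hndfull : ((inl x :: m : List (X ⊕ Y))).Nodup := List.nodup_cons.mpr ⟨hxm, hnd⟩
    obtain ⟨hnd1, hnd2⟩ := go_nodup h hndfull
    -- index functions
    set k := tl.length + 1 with hk
    let xf : Fin k → X := fun i => (pl.get i).1
    let yf : Fin k → Y := fun i => (pl.get i).2
    have hinjx : Function.Injective xf := fun i j hij => nodup_get_inj pl Prod.fst hnd1 hij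
    have hinjy : Function.Injective yf := fun i j hij => nodup_get_inj pl Prod.snd hnd2 hij
    -- rewrite the two sums
    have hsum1 : (pl.map (fun q => L - w q.1 q.2)).sum
        = ∑ i : Fin k, (L - w (xf i) (yf i)) := by
      rw [sum_map_fin]
      rfl
    have hconv : ∀ i : Fin k,
        (if h' : (i.val + 1) < k then (pl.get ⟨i.val + 1, h'⟩).1 else x) = xf (i + 1) := by
      intro i
      by_cases h' : (i.val + 1) < k
      · rw [dif_pos h']
        have hv : ((i + 1 : Fin k) : ℕ) = i.val + 1 := by
          apply Fin.val_add_one_of_lt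
          rw [Fin.lt_iff_val_lt_val, Fin.val_last]
          omega
        show (pl.get ⟨i.val + 1, h'⟩).1 = (pl.get ((i + 1 : Fin k))).1
        exact congrArg (fun j => (pl.get j).1) (Fin.ext hv.symm)
      · rw [dif_neg h']
        have hi : i = Fin.last tl.length := Fin.ext (by
          have := i.isLt; simp only [Fin.val_last]; omega)
        rw [hi, Fin.last_add_one]
        rfl
    have hsum2 : cross w pl x = ∑ i : Fin k, w (xf (i + 1)) (yf i) := by
      rw [cross_eq]
      apply Finset.sum_congr rfl
      intro i _
      rw [hconv i]
      rfl
    rw [hw, hsum1, hsum2]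
    have hg := hgood tl.length xf yf hinjx hinjy
    have hconst : ∑ _i : Fin k, L = (k : ℝ) * L := by
      rw [Finset.sum_const, Finset.card_univ, Fintype.card_fin, nsmul_eq_mul]
    rw [Finset.sum_sub_distrib, hconst]
    push_cast at hg ⊢
    have hkL : (k:ℝ) * L = ((tl.length:ℝ) + 1) * L := by rw [hk]; push_cast; ring
    linarith

lemma cyc_all (w : X → Y → ℝ) (L K C : ℝ) (hC1 : ∀ x y, -C ≤ w x y)
    (hC2 : ∀ x y, -C ≤ L - w x y) (hC0 : 0 ≤ C)
    (hK : ((Fintype.card X + Fintype.card Y : ℕ) : ℝ) * C + C ≤ K) (hK0 : 0 ≤ K)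
    (hgood : ∀ (m' : ℕ) (xf : Fin (m' + 1) → X) (yf : Fin (m' + 1) → Y),
      Function.Injective xf → Function.Injective yf →
      ∑ i, w (xf i) (yf i) ≤ ((m' + 1 : ℕ) : ℝ) * L + ∑ i, w (xf (i + 1)) (yf i)) :
    ∀ (a : X ⊕ Y) (m : List (X ⊕ Y)), a ∉ m → m.Nodup →
      0 ≤ tW (Wgt w L K) (a :: (m ++ [a])) := by
  intro a m ham hnd
  rcases a with x | y
  · exact cyc_inl w L K C hC1 hC2 hC0 hK hK0 hgood m x ham hnd
  · rcases Classical.em (∃ x', (inl x' : X ⊕ Y) ∈ m) with hex | hex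
    case inl =>
      obtain ⟨x', hmem⟩ := hex
      obtain ⟨m₁, m₂, rfl⟩ := List.append_of_mem hmem
      have e1 : tW (Wgt w L K) ((inr y : X ⊕ Y) :: ((m₁ ++ inl x' :: m₂) ++ [inr y]))
          = tW (Wgt w L K) ((inr y : X ⊕ Y) :: (m₁ ++ [inl x']))
            + tW (Wgt w L K) ((inl x' : X ⊕ Y) :: (m₂ ++ [inr y])) := by
        rw [show ((inr y : X ⊕ Y) :: ((m₁ ++ inl x' :: m₂) ++ [inr y]))
            = ((inr y : X ⊕ Y) :: m₁) ++ inl x' :: (m₂ ++ [inr y]) by simp]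
        exact tW_split _ _ _ _
      have e2 : tW (Wgt w L K) ((inl x' : X ⊕ Y) :: ((m₂ ++ inr y :: m₁) ++ [inl x']))
          = tW (Wgt w L K) ((inl x' : X ⊕ Y) :: (m₂ ++ [inr y]))
            + tW (Wgt w L K) ((inr y : X ⊕ Y) :: (m₁ ++ [inl x'])) := by
        rw [show ((inl x' : X ⊕ Y) :: ((m₂ ++ inr y :: m₁) ++ [inl x']))
            = ((inl x' : X ⊕ Y) :: m₂) ++ inr y :: (m₁ ++ [inl x']) by simp]
        exact tW_split _ _ _ _
      rw [List.nodup_append', List.nodup_cons] at hnd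
      obtain ⟨hn1, ⟨hx'm2, hn2⟩, hdisj⟩ := hnd
      simp only [List.mem_append, List.mem_cons] at ham
      push_neg at ham
      obtain ⟨hy1, hy2, hy3⟩ := ham
      have hx'm1 : (inl x' : X ⊕ Y) ∉ m₁ := fun hc => hdisj hc (by simp)
      have hnotin : (inl x' : X ⊕ Y) ∉ m₂ ++ inr y :: m₁ := by
        simp only [List.mem_append, List.mem_cons]
        push_neg
        exact ⟨hx'm2, by simp, hx'm1⟩
      have hnd' : (m₂ ++ (inr y : X ⊕ Y) :: m₁).Nodup := by
        rw [List.nodup_append', List.nodup_cons]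
        refine ⟨hn2, ⟨hy1, hn1⟩, ?_⟩
        intro z hz2 hzc
        rcases List.mem_cons.mp hzc with rfl | hz1
        · exact hy3 hz2
        · exact hdisj hz1 (by simp [hz2])
      have h0 := cyc_inl w L K C hC1 hC2 hC0 hK hK0 hgood (m₂ ++ inr y :: m₁) x' hnotin hnd'
      rw [e2] at h0
      rw [e1]
      linarith
    case inr =>
      push_neg at hex
      cases m with
      | nil =>
        show 0 ≤ tW (Wgt w L K) [inr y, inr y]
        rw [show tW (Wgt w L K) [(inr y : X ⊕ Y), inr y] = Wgt w L K (inr y) (inr y) + 0 from by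
          simp [tW]]
        simp [Wgt]
        exact hK0
      | cons c rest =>
        rcases c with x'' | y''
        · exact absurd (by simp : (inl x'' : X ⊕ Y) ∈ (inl x'' :: rest : List (X ⊕ Y)))
            (hex x'')
        · have hb := tW_ge (Wgt w L K) (wgt_ge w L K C hC1 hC2 hC0 hK0) hC0
            ((inr y'' : X ⊕ Y) :: (rest ++ [inr y]))
          simp only [List.cons_append, tW_cons]
          have e : Wgt w L K (inr y) (inr y'') = K := rfl
          rw [e]
          have hlen : ((rest.length : ℝ) + 1) ≤ ((Fintype.card X + Fintype.card Y : ℕ) : ℝ) := by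
            have h2 := hnd.length_le_card
            rw [Fintype.card_sum] at h2
            simp only [List.length_cons] at h2
            exact_mod_cast h2
          simp only [List.length_cons, List.length_append, List.length_cons,
            List.length_nil] at hb
          push_cast at hb
          nlinarith
end Eps13Aux


namespace Eps13Aux
open List Sum

variable {X Y : Type*} [Fintype X] [Fintype Y]

lemma exists_AB [Nonempty X] [Nonempty Y] (w : X → Y → ℝ) (L : ℝ)
    (hgood : ∀ (m' : ℕ) (xf : Fin (m' + 1) → X) (yf : Fin (m' + 1) → Y),
      Function.Injective xf → Function.Injective yf →
      ∑ i, w (xf i) (yf i) ≤ ((m' + 1 : ℕ) : ℝ) * L + ∑ i, w (xf (i + 1)) (yf i)) :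
    ∃ (u : X → ℝ) (v : Y → ℝ), ∀ x y, w x y - L ≤ v y - u x ∧ v y - u x ≤ w x y := by
  have hne : (Finset.univ : Finset (X × Y)).Nonempty := Finset.univ_nonempty
  set C : ℝ := (Finset.univ.sup' hne fun q : X × Y => |w q.1 q.2|) + |L| with hC
  have hCw : ∀ x y, |w x y| ≤ C := by
    intro x y
    have := Finset.le_sup' (fun q : X × Y => |w q.1 q.2|) (Finset.mem_univ (x, y))
    have := abs_nonneg L
    simp only [hC]; linarith
  have hC1 : ∀ x y, -C ≤ w x y := fun x y => by
    have := hCw x y; have := neg_abs_le (w x y); linarith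
  have hC2 : ∀ x y, -C ≤ L - w x y := fun x y => by
    have h5 := Finset.le_sup' (fun q : X × Y => |w q.1 q.2|) (Finset.mem_univ (x, y))
    have h6 := le_abs_self (w x y)
    have h7 := neg_abs_le L
    simp only [hC]
    linarith
  have hC0 : 0 ≤ C := by
    have := hCw Classical.ofNonempty Classical.ofNonempty
    have := abs_nonneg (w (Classical.ofNonempty : X) (Classical.ofNonempty : Y))
    linarith
  set K : ℝ := ((Fintype.card X + Fintype.card Y : ℕ) : ℝ) * C + C with hKdef
  have hK0 : 0 ≤ K := by positivity
  obtain ⟨d, hd⟩ := exists_potential (Wgt w L K) (wgt_ge w L K C hC1 hC2 hC0 hK0) hC0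
    (cyc_all w L K C hC1 hC2 hC0 le_rfl hK0 hgood)
  refine ⟨fun x => d (inl x), fun y => d (inr y), fun x y => ⟨?_, ?_⟩⟩
  · have h1 := hd (inl x) (inr y)
    have e : Wgt w L K (inl x) (inr y) = L - w x y := rfl
    rw [e] at h1
    linarith
  · have h2 := hd (inr y) (inl x)
    have e : Wgt w L K (inr y) (inl x) = w x y := rfl
    rw [e] at h2
    linarith

lemma rank_outer (u : X → ℝ) (v : Y → ℝ) :
    (Matrix.of fun x y => u x * v y).rank ≤ 1 := by
  have heq : (Matrix.of fun x y => u x * v y)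
      = (Matrix.of fun x (_ : Unit) => u x) * (Matrix.of fun (_ : Unit) y => v y) := by
    ext x y
    simp [Matrix.mul_apply]
  rw [heq]
  calc ((Matrix.of fun x (_ : Unit) => u x) * (Matrix.of fun (_ : Unit) y => v y)).rank
      ≤ (Matrix.of fun (_ : Unit) y => v y).rank := Matrix.rank_mul_le_right _ _
    _ ≤ Fintype.card Unit := Matrix.rank_le_card_height _
    _ = 1 := Fintype.card_unit

lemma rank_single [DecidableEq X] [DecidableEq Y] (g : X → Y → ℝ) (x₀ : X) (y₀ : Y)
    (h : ∀ x y, ¬(x = x₀ ∧ y = y₀) → g x y = 0) : (Matrix.of g).rank ≤ 1 := by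
  have hg : (Matrix.of g) = Matrix.of (fun x y =>
      (if x = x₀ then g x₀ y₀ else 0) * (if y = y₀ then 1 else 0)) := by
    ext x y
    simp only [Matrix.of_apply]
    by_cases hx : x = x₀ <;> by_cases hy : y = y₀
    · subst hx; subst hy; simp
    · subst hx; rw [if_pos rfl, if_neg hy, mul_zero]; exact h _ _ (fun hc => hy hc.2)
    · subst hy; rw [if_neg hx, zero_mul]; exact h _ _ (fun hc => hx hc.1)
    · rw [if_neg hx, zero_mul]; exact h _ _ (fun hc => hx hc.1)
  rw [hg]
  exact rank_outer _ _

end Eps13Aux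


/-- for a pmf `p` on `X × Y` with strictly positive marginals and
`M = |X|·|Y| + 1`, we have `ε₁(p) ≤ ε₃`. -/
theorem eps1_le_eps3 {X Y : Type*} [Fintype X] [Fintype Y]
    (p : X × Y → ℝ) (hp : IsPMF p)
    (hX : ∀ x, 0 < ∑ y, p (x, y)) (hY : ∀ y, 0 < ∑ x, p (x, y)) :
    eps1 p ≤ eps3 (fun x y => p (x, y)) (Fintype.card X * Fintype.card Y + 1) := by
  classical
  obtain ⟨hp0, hp1⟩ := hp
  have hex : ∃ s : X × Y, 0 < p s := by
    by_contra hcon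
    push_neg at hcon
    have h0 : ∑ s : X × Y, p s ≤ 0 := Finset.sum_nonpos (fun s _ => hcon s)
    linarith
  obtain ⟨s₀, hs₀⟩ := hex
  have hs₀' : 0 < p (s₀.1, s₀.2) := by simpa using hs₀
  haveI : Nonempty X := ⟨s₀.1⟩
  haveI : Nonempty Y := ⟨s₀.2⟩
  set n := Fintype.card X * Fintype.card Y with hn
  let e : X × Y ≃ Fin n := (Fintype.equivFin _).trans (finCongr (Fintype.card_prod X Y))
  let tIdx : X → Y → Fin (n + 1) := fun x y =>
    ⟨(e (x, y)).val + 1, by have := (e (x, y)).isLt; omega⟩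
  have htIdx : ∀ x y, tIdx x y ≠ 0 := fun x y => by
    simp only [tIdx, Ne, Fin.ext_iff, Fin.val_zero]
    omega
  -- the path-value set is bounded below by 0
  have hlb : ∀ v ∈ {v : ℝ | ∃ (m : ℕ) (x : Fin (m + 1) → X) (y : Fin (m + 1) → Y),
      IsAdmissiblePath p x y ∧ v = pathValue p x y}, (0 : ℝ) ≤ v := by
    rintro v ⟨m, xf, yf, hadm, rfl⟩
    exact Real.rpow_nonneg (div_nonneg (Finset.prod_nonneg fun i _ => hp0 _)
      (Finset.prod_nonneg fun i _ => hp0 _)) _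
  have hbddb : BddBelow {v : ℝ | ∃ (m : ℕ) (x : Fin (m + 1) → X) (y : Fin (m + 1) → Y),
      IsAdmissiblePath p x y ∧ v = pathValue p x y} := ⟨0, hlb⟩
  -- the δ set is bounded above
  haveI : Nonempty {xy : X × Y // 0 < p (xy.1, xy.2)} := ⟨⟨s₀, hs₀'⟩⟩
  have hbddA : BddAbove {r : ℝ | ∃ δ : X → Y → Fin (n + 1) → ℝ,
      (∀ x y t, 0 ≤ δ x y t) ∧
      (∀ x y, ∑ t, δ x y t = 1) ∧
      (∀ t, (Matrix.of fun x y => p (x, y) * δ x y t).rank ≤ 1) ∧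
      r = ∑ t, ⨅ xy : {xy : X × Y // 0 < p (xy.1, xy.2)}, δ xy.1.1 xy.1.2 t} := by
    refine ⟨((n + 1 : ℕ) : ℝ), ?_⟩
    rintro r ⟨δ, h0, h1, -, rfl⟩
    calc ∑ t, ⨅ xy : {xy : X × Y // 0 < p (xy.1, xy.2)}, δ xy.1.1 xy.1.2 t
        ≤ ∑ _t : Fin (n + 1), (1 : ℝ) := by
          apply Finset.sum_le_sum
          intro t _
          have h2 : δ s₀.1 s₀.2 t ≤ 1 := by
            have h3 := Finset.single_le_sum (fun t' (_ : t' ∈ Finset.univ) => h0 s₀.1 s₀.2 t')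
              (Finset.mem_univ t)
            rw [h1 s₀.1 s₀.2] at h3
            exact h3
          exact le_trans (ciInf_le (Set.Finite.bddBelow (Set.finite_range _)) ⟨s₀, hs₀'⟩) h2
      _ = ((n + 1 : ℕ) : ℝ) := by simp
  by_cases hpos : ∀ x y, 0 < p (x, y)
  · -- positive case
    have hpos' : ∀ s : X × Y, 0 < p s := fun s => by simpa using hpos s.1 s.2
    set ε := eps1 p with hεdef
    have hne2 : (Finset.univ : Finset (X × Y)).Nonempty := Finset.univ_nonempty
    set pmin := Finset.univ.inf' hne2 p with hpmindef
    set pmax := Finset.univ.sup' hne2 p with hpmaxdef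
    have hpmin : 0 < pmin := (Finset.lt_inf'_iff hne2).mpr (fun s _ => hpos' s)
    have hpmax : 0 < pmax :=
      lt_of_lt_of_le hs₀ (Finset.le_sup' p (Finset.mem_univ s₀))
    have hεlb : ∀ v ∈ {v : ℝ | ∃ (m : ℕ) (x : Fin (m + 1) → X) (y : Fin (m + 1) → Y),
        IsAdmissiblePath p x y ∧ v = pathValue p x y}, pmin / pmax ≤ v := by
      rintro v ⟨m, xf, yf, hadm, rfl⟩
      have hnum : pmin ^ (m + 1) ≤ ∏ i, p (xf i, yf i) := by
        calc pmin ^ (m + 1) = ∏ _i : Fin (m + 1), pmin := by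
              rw [Finset.prod_const, Finset.card_univ, Fintype.card_fin]
          _ ≤ ∏ i, p (xf i, yf i) := Finset.prod_le_prod (fun i _ => hpmin.le)
              (fun i _ => Finset.inf'_le p (Finset.mem_univ _))
      have hden : ∏ i, p (xf i, yf (i - 1)) ≤ pmax ^ (m + 1) := by
        calc ∏ i, p (xf i, yf (i - 1)) ≤ ∏ _i : Fin (m + 1), pmax :=
              Finset.prod_le_prod (fun i _ => (hpos' _).le)
                (fun i _ => Finset.le_sup' p (Finset.mem_univ _))
          _ = pmax ^ (m + 1) := by rw [Finset.prod_const, Finset.card_univ, Fintype.card_fin]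
      have hdenpos : 0 < ∏ i, p (xf i, yf (i - 1)) := Finset.prod_pos fun i _ => hpos' _
      have hfrac : (pmin / pmax) ^ (m + 1)
          ≤ (∏ i, p (xf i, yf i)) / ∏ i, p (xf i, yf (i - 1)) := by
        rw [div_pow]
        exact div_le_div₀ (Finset.prod_nonneg fun i _ => hp0 _) hnum hdenpos hden
      have hstep : pmin / pmax = ((pmin / pmax) ^ (m + 1)) ^ (1 / ((m : ℝ) + 1)) := by
        have hc : (0 : ℝ) ≤ pmin / pmax := (div_pos hpmin hpmax).le
        rw [← Real.rpow_natCast (pmin / pmax) (m + 1), ← Real.rpow_mul hc]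
        have he : ((m + 1 : ℕ) : ℝ) * (1 / ((m : ℝ) + 1)) = 1 := by
          push_cast
          field_simp
        rw [he, Real.rpow_one]
      rw [hstep]
      exact Real.rpow_le_rpow (pow_nonneg (div_pos hpmin hpmax).le _) hfrac (by positivity)
    have hPSne : ∃ v, v ∈ {v : ℝ | ∃ (m : ℕ) (x : Fin (m + 1) → X) (y : Fin (m + 1) → Y),
        IsAdmissiblePath p x y ∧ v = pathValue p x y} := by
      refine ⟨pathValue p (fun _ : Fin 1 => s₀.1) (fun _ : Fin 1 => s₀.2),
        0, _, _, ⟨?_, ?_, fun i => hpos _ _⟩, rfl⟩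
      · intro a b _; exact Fin.ext (by omega)
      · intro a b _; exact Fin.ext (by omega)
    have hεpos : 0 < ε := lt_of_lt_of_le (div_pos hpmin hpmax) (le_csInf hPSne hεlb)
    have hεle : ∀ (m : ℕ) (xf : Fin (m + 1) → X) (yf : Fin (m + 1) → Y),
        IsAdmissiblePath p xf yf → ε ≤ pathValue p xf yf := fun m xf yf h =>
      csInf_le hbddb ⟨m, xf, yf, h, rfl⟩
    set L := -Real.log ε with hL
    set w : X → Y → ℝ := fun x y => Real.log (p (x, y)) with hw
    have hgood : ∀ (m' : ℕ) (xf : Fin (m' + 1) → X) (yf : Fin (m' + 1) → Y),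
        Function.Injective xf → Function.Injective yf →
        ∑ i, w (xf i) (yf i) ≤ ((m' + 1 : ℕ) : ℝ) * L + ∑ i, w (xf (i + 1)) (yf i) := by
      intro m' xf yf hjx hjy
      set x' : Fin (m' + 1) → X := fun j => xf (1 - j) with hx'
      set y' : Fin (m' + 1) → Y := fun j => yf (-j) with hy'
      have hadm : IsAdmissiblePath p x' y' := by
        refine ⟨?_, ?_, fun i => hpos _ _⟩
        · intro a b hab
          exact sub_right_inj.mp (hjx hab)
        · intro a b hab
          exact neg_inj.mp (hjy hab)
      have hval := hεle m' x' y' hadm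
      set N := ∏ i : Fin (m' + 1), p (xf (i + 1), yf i) with hN
      set D := ∏ i : Fin (m' + 1), p (xf i, yf i) with hD
      have hNpos : 0 < N := Finset.prod_pos fun i _ => hpos' _
      have hDpos : 0 < D := Finset.prod_pos fun i _ => hpos' _
      have hnum : (∏ j, p (x' j, y' j)) = N := by
        calc (∏ j, p (x' j, y' j))
            = ∏ j, p (xf ((Equiv.neg (Fin (m' + 1)) j) + 1), yf (Equiv.neg (Fin (m' + 1)) j)) := by
              apply Finset.prod_congr rfl
              intro j _
              show p (xf (1 - j), yf (-j)) = p (xf (-j + 1), yf (-j))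
              rw [sub_eq_neg_add]
          _ = N := Equiv.prod_comp (Equiv.neg (Fin (m' + 1))) (fun i => p (xf (i + 1), yf i))
      have hden : (∏ j, p (x' j, y' (j - 1))) = D := by
        calc (∏ j, p (x' j, y' (j - 1)))
            = ∏ j, p (xf (Equiv.subLeft (1 : Fin (m' + 1)) j),
                yf (Equiv.subLeft (1 : Fin (m' + 1)) j)) := by
              apply Finset.prod_congr rfl
              intro j _
              show p (xf (1 - j), yf (-(j - 1))) = p (xf (1 - j), yf (1 - j))
              rw [neg_sub]
          _ = D := Equiv.prod_comp (Equiv.subLeft (1 : Fin (m' + 1))) (fun i => p (xf i, yf i))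
      have hpv : pathValue p x' y' = (N / D) ^ (1 / ((m' : ℝ) + 1)) := by
        show ((∏ j, p (x' j, y' j)) / ∏ j, p (x' j, y' (j - 1))) ^ (1 / ((m' : ℝ) + 1)) = _
        rw [hnum, hden]
      rw [hpv] at hval
      have hfrac : ε ^ ((m' + 1 : ℕ) : ℝ) ≤ N / D := by
        have h1 := Real.rpow_le_rpow hεpos.le hval (by positivity : (0 : ℝ) ≤ ((m' + 1 : ℕ) : ℝ))
        rw [← Real.rpow_mul (by positivity : (0 : ℝ) ≤ N / D)] at h1
        have he : (1 / ((m' : ℝ) + 1)) * ((m' + 1 : ℕ) : ℝ) = 1 := by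
          push_cast
          field_simp
        rwa [he, Real.rpow_one] at h1
      have hlogs : ((m' + 1 : ℕ) : ℝ) * Real.log ε ≤ Real.log N - Real.log D := by
        have h2 := Real.log_le_log (by positivity) hfrac
        rwa [Real.log_rpow hεpos, Real.log_div hNpos.ne' hDpos.ne'] at h2
      have hlogN : Real.log N = ∑ i, w (xf (i + 1)) (yf i) := by
        rw [hN, Real.log_prod (fun i _ => (hpos _ _).ne')]
      have hlogD : Real.log D = ∑ i, w (xf i) (yf i) := by
        rw [hD, Real.log_prod (fun i _ => (hpos _ _).ne')]
      rw [hlogN, hlogD] at hlogs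
      have hLL : ((m' + 1 : ℕ) : ℝ) * L = -(((m' + 1 : ℕ) : ℝ) * Real.log ε) := by
        rw [hL]; ring
      linarith
    obtain ⟨u, v, huv⟩ := Eps13Aux.exists_AB w L hgood
    have hABle : ∀ x y, Real.exp (v y - u x) ≤ p (x, y) := fun x y => by
      calc Real.exp (v y - u x) ≤ Real.exp (w x y) := Real.exp_le_exp.mpr (huv x y).2
        _ = p (x, y) := Real.exp_log (hpos x y)
    have hABge : ∀ x y, ε * p (x, y) ≤ Real.exp (v y - u x) := fun x y => by
      have h2 : Real.exp (w x y - L) = p (x, y) * ε := by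
        rw [Real.exp_sub, Real.exp_log (hpos x y), hL, Real.exp_neg, Real.exp_log hεpos]
        field_simp
      calc ε * p (x, y) = Real.exp (w x y - L) := by rw [h2]; ring
        _ ≤ Real.exp (v y - u x) := Real.exp_le_exp.mpr (by linarith [(huv x y).1])
    set δ0 : X → Y → ℝ := fun x y => Real.exp (v y - u x) / p (x, y) with hδ0
    have hδ0ge : ∀ x y, ε ≤ δ0 x y := fun x y =>
      (le_div_iff₀ (hpos x y)).mpr (hABge x y)
    have hδ0le : ∀ x y, δ0 x y ≤ 1 := fun x y =>
      (div_le_one (hpos x y)).mpr (hABle x y)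
    set δ : X → Y → Fin (n + 1) → ℝ := fun x y t =>
      (if t = 0 then δ0 x y else 0) + (if t = tIdx x y then 1 - δ0 x y else 0) with hδ
    have hδat0 : ∀ x y, δ x y 0 = δ0 x y := fun x y => by
      show (if (0 : Fin (n+1)) = 0 then δ0 x y else 0)
        + (if (0 : Fin (n+1)) = tIdx x y then 1 - δ0 x y else 0) = δ0 x y
      rw [if_pos rfl, if_neg (fun hc => htIdx x y hc.symm), add_zero]
    have h0 : ∀ x y t, 0 ≤ δ x y t := by
      intro x y t
      apply add_nonneg
      · split
        · linarith [hδ0ge x y, hεpos]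
        · exact le_refl 0
      · split
        · linarith [hδ0le x y]
        · exact le_refl 0
    have h1 : ∀ x y, ∑ t, δ x y t = 1 := by
      intro x y
      show (∑ t, ((if t = 0 then δ0 x y else 0) + (if t = tIdx x y then 1 - δ0 x y else 0))) = 1
      rw [Finset.sum_add_distrib, Finset.sum_ite_eq' Finset.univ (0 : Fin (n+1)) (fun _ => δ0 x y),
        Finset.sum_ite_eq' Finset.univ (tIdx x y) (fun _ => 1 - δ0 x y)]
      simp
    have hrank : ∀ t : Fin (n + 1), (Matrix.of fun x y => p (x, y) * δ x y t).rank ≤ 1 := by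
      intro t
      by_cases ht : t = 0
      · subst ht
        have heq : (Matrix.of fun x y => p (x, y) * δ x y 0)
            = Matrix.of (fun x y => Real.exp (-u x) * Real.exp (v y)) := by
          ext x y
          simp only [Matrix.of_apply]
          rw [hδat0, hδ0]
          show p (x, y) * (Real.exp (v y - u x) / p (x, y)) = _
          rw [mul_comm, div_mul_cancel₀ _ (hpos x y).ne', ← Real.exp_add]
          ring_nf
        rw [heq]
        exact Eps13Aux.rank_outer _ _
      · have hlt : t.val - 1 < n := by have := t.isLt; have : t.val ≠ 0 := fun hc => ht (Fin.ext hc); omega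
        apply Eps13Aux.rank_single _ (e.symm ⟨t.val - 1, hlt⟩).1 (e.symm ⟨t.val - 1, hlt⟩).2
        intro x y hxy
        suffices hs : δ x y t = 0 by rw [hs, mul_zero]
        show (if t = 0 then δ0 x y else 0) + (if t = tIdx x y then 1 - δ0 x y else 0) = 0
        rw [if_neg ht, if_neg ?hne, add_zero]
        case hne =>
          intro hteq
          have hv1 : t.val = (e (x, y)).val + 1 := congrArg Fin.val hteq
          have h2 : e (x, y) = ⟨t.val - 1, hlt⟩ := by
            apply Fin.ext
            show ((e (x, y)).val : ℕ) = t.val - 1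
            omega
          have h3 : (x, y) = e.symm ⟨t.val - 1, hlt⟩ := by
            rw [← h2, Equiv.symm_apply_apply]
          exact hxy ⟨congrArg Prod.fst h3, congrArg Prod.snd h3⟩
    have hεr : ε ≤ ∑ t, ⨅ xy : {xy : X × Y // 0 < p (xy.1, xy.2)}, δ xy.1.1 xy.1.2 t := by
      have hterm0 : ε ≤ ⨅ xy : {xy : X × Y // 0 < p (xy.1, xy.2)}, δ xy.1.1 xy.1.2 0 :=
        le_ciInf fun xy => by rw [hδat0]; exact hδ0ge _ _
      have hnn : ∀ t : Fin (n + 1),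
          0 ≤ ⨅ xy : {xy : X × Y // 0 < p (xy.1, xy.2)}, δ xy.1.1 xy.1.2 t :=
        fun t => Real.iInf_nonneg fun xy => h0 _ _ _
      calc ε ≤ ⨅ xy : {xy : X × Y // 0 < p (xy.1, xy.2)}, δ xy.1.1 xy.1.2 0 := hterm0
        _ ≤ ∑ t, ⨅ xy : {xy : X × Y // 0 < p (xy.1, xy.2)}, δ xy.1.1 xy.1.2 t :=
          Finset.single_le_sum (fun t _ => hnn t) (Finset.mem_univ 0)
    exact le_trans hεr (le_csSup hbddA ⟨δ, h0, h1, hrank, rfl⟩)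
  · -- degenerate case: some zero entry
    push_neg at hpos
    obtain ⟨xb, yb, hxyb⟩ := hpos
    have hz : p (xb, yb) = 0 := le_antisymm hxyb (hp0 _)
    obtain ⟨yg, hyg⟩ : ∃ y', 0 < p (xb, y') := by
      by_contra hcon
      push_neg at hcon
      have : ∑ y, p (xb, y) ≤ 0 := Finset.sum_nonpos fun y _ => hcon y
      linarith [hX xb]
    obtain ⟨xg, hxg⟩ : ∃ x', 0 < p (x', yb) := by
      by_contra hcon
      push_neg at hcon
      have : ∑ x, p (x, yb) ≤ 0 := Finset.sum_nonpos fun x _ => hcon x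
      linarith [hY yb]
    have hxx : xb ≠ xg := by
      intro hc
      rw [← hc] at hxg
      rw [hz] at hxg
      exact lt_irrefl _ hxg
    have hyy : yb ≠ yg := by
      intro hc
      rw [← hc] at hyg
      rw [hz] at hyg
      exact lt_irrefl _ hyg
    set xf : Fin 2 → X := fun i => if i = 0 then xb else xg with hxf
    set yf : Fin 2 → Y := fun i => if i = 0 then yb else yg with hyf
    have hxf0 : xf 0 = xb := if_pos rfl
    have hxf1 : xf 1 = xg := if_neg (by decide)
    have hyf0 : yf 0 = yb := if_pos rfl
    have hyf1 : yf 1 = yg := if_neg (by decide)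
    have hadm : IsAdmissiblePath p xf yf := by
      refine ⟨?_, ?_, ?_⟩
      · intro a b hab
        have hfin : ∀ c : Fin 2, c = 0 ∨ c = 1 := by decide
        rcases hfin a with rfl | rfl <;> rcases hfin b with rfl | rfl
        · rfl
        · exact absurd (by rw [hxf0, hxf1] at hab; exact hab) hxx
        · exact absurd (by rw [hxf0, hxf1] at hab; exact hab.symm) hxx
        · rfl
      · intro a b hab
        have hfin : ∀ c : Fin 2, c = 0 ∨ c = 1 := by decide
        rcases hfin a with rfl | rfl <;> rcases hfin b with rfl | rfl
        · rfl
        · exact absurd (by rw [hyf0, hyf1] at hab; exact hab) hyy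
        · exact absurd (by rw [hyf0, hyf1] at hab; exact hab.symm) hyy
        · rfl
      · intro i
        have hfin : ∀ c : Fin 2, c = 0 ∨ c = 1 := by decide
        rcases hfin i with rfl | rfl
        · rw [show ((0 : Fin 2) - 1) = 1 from by decide, hxf0, hyf1]
          exact hyg
        · rw [show ((1 : Fin 2) - 1) = 0 from by decide, hxf1, hyf0]
          exact hxg
    have hval : pathValue p (m := 1) xf yf = 0 := by
      have hnum : (∏ i : Fin (1 + 1), p (xf i, yf i)) = 0 := by
        rw [show (∏ i : Fin (1 + 1), p (xf i, yf i)) = ∏ i : Fin 2, p (xf i, yf i) from rfl,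
          Fin.prod_univ_two, hxf0, hyf0, hz, zero_mul]
      unfold pathValue
      rw [hnum, zero_div]
      exact Real.zero_rpow (by norm_num)
    have heps0 : eps1 p ≤ 0 := csInf_le hbddb ⟨1, xf, yf, hadm, hval.symm⟩
    set δ : X → Y → Fin (n + 1) → ℝ := fun x y t => if t = tIdx x y then 1 else 0 with hδ
    have h0 : ∀ x y t, 0 ≤ δ x y t := by
      intro x y t
      show (0:ℝ) ≤ if t = tIdx x y then 1 else 0
      split <;> norm_num
    have h1 : ∀ x y, ∑ t, δ x y t = 1 := by
      intro x y
      show (∑ t, if t = tIdx x y then (1:ℝ) else 0) = 1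
      rw [Finset.sum_ite_eq' Finset.univ (tIdx x y) (fun _ => (1:ℝ))]
      simp
    have hrank : ∀ t : Fin (n + 1), (Matrix.of fun x y => p (x, y) * δ x y t).rank ≤ 1 := by
      intro t
      by_cases ht : t = 0
      · subst ht
        apply Eps13Aux.rank_single _ s₀.1 s₀.2
        intro x y _
        show p (x, y) * (if (0 : Fin (n+1)) = tIdx x y then (1:ℝ) else 0) = 0
        rw [if_neg (fun hc => htIdx x y hc.symm), mul_zero]
      · have hlt : t.val - 1 < n := by
          have := t.isLt; have : t.val ≠ 0 := fun hc => ht (Fin.ext hc); omega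
        apply Eps13Aux.rank_single _ (e.symm ⟨t.val - 1, hlt⟩).1 (e.symm ⟨t.val - 1, hlt⟩).2
        intro x y hxy
        show p (x, y) * (if t = tIdx x y then (1:ℝ) else 0) = 0
        rw [if_neg ?hne, mul_zero]
        case hne =>
          intro hteq
          have hv1 : t.val = (e (x, y)).val + 1 := congrArg Fin.val hteq
          have h2 : e (x, y) = ⟨t.val - 1, hlt⟩ := by
            apply Fin.ext
            show ((e (x, y)).val : ℕ) = t.val - 1
            omega
          have h3 : (x, y) = e.symm ⟨t.val - 1, hlt⟩ := by
            rw [← h2, Equiv.symm_apply_apply]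
          exact hxy ⟨congrArg Prod.fst h3, congrArg Prod.snd h3⟩
    have hr0 : (0:ℝ) ≤ ∑ t, ⨅ xy : {xy : X × Y // 0 < p (xy.1, xy.2)}, δ xy.1.1 xy.1.2 t :=
      Finset.sum_nonneg fun t _ => Real.iInf_nonneg fun xy => h0 _ _ _
    exact le_trans heps0 (le_trans hr0 (le_csSup hbddA ⟨δ, h0, h1, hrank, rfl⟩))
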